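/- Let X be a normed space, f : X → ℝ, and suppose x₀ is a local minimum of f on X and there exist δ > 0, K > 0 such that |f(x₀+x) − f(x₀)| ≤ K‖x‖² for ‖x‖ ≤ δ. Then f^{(2)+}(x₀; x) := limsup_{λ↓0} (1/λ²)·(f(x₀+2λx) − 2f(x₀+λx) + f(x₀)) ≥ 0 for every x ∈ X. -/

import Mathlib

set_option maxHeartbeats 1000000


theorem stmt12 {X : Type*} [NormedAddCommGroup X] [NormedSpace ℝ X]
    (f : X → ℝ) (x₀ : X) (hmin : IsLocalMin f x₀)
    (δ K : ℝ) (hδ : 0 < δ) (hK : 0 < K)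
    (hquad : ∀ x : X, ‖x‖ ≤ δ → |f (x₀ + x) - f x₀| ≤ K * ‖x‖ ^ 2) :
    ∀ x : X, (0 : EReal) ≤ Filter.limsup
      (fun lam : ℝ =>
        (((f (x₀ + (2 * lam) • x) - 2 * f (x₀ + lam • x) + f x₀) / lam ^ 2 : ℝ) : EReal))
      (nhdsWithin (0:ℝ) (Set.Ioi 0)) := by
  intro x
  by_contra hcon
  push_neg at hcon
  obtain ⟨c, hc1, hc2⟩ := EReal.lt_iff_exists_real_btwn.mp hcon
  have hcneg : c < 0 := by exact_mod_cast hc2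
  have hev : ∀ᶠ lam in nhdsWithin (0:ℝ) (Set.Ioi 0),
      ((f (x₀ + (2*lam)•x) - 2*f (x₀+lam•x) + f x₀)/lam^2 : ℝ) < c := by
    have h := Filter.eventually_lt_of_limsup_lt hc1
    filter_upwards [h] with lam h'
    exact_mod_cast h'
  rw [eventually_nhdsWithin_iff, Metric.eventually_nhds_iff] at hev
  obtain ⟨ε, hε, hεg⟩ := hev
  have hmin2 : ∀ᶠ y in nhds x₀, f x₀ ≤ f y := hmin
  rw [Metric.eventually_nhds_iff] at hmin2
  obtain ⟨ε₁, hε₁, hmin'⟩ := hmin2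
  set r : ℝ := ‖x‖ + 1 with hr
  have hrpos : 0 < r := by positivity
  have hxr : ‖x‖ < r := by simp [hr]
  set η : ℝ := min (ε/2) (min (ε₁/(2*r)) (δ/r)) with hη
  have hηpos : 0 < η := by
    apply lt_min (by positivity) (lt_min (by positivity) (by positivity))
  have hηε : η ≤ ε/2 := min_le_left _ _
  have hηε₁ : η ≤ ε₁/(2*r) := le_trans (min_le_right _ _) (min_le_left _ _)
  have hηδ : η ≤ δ/r := le_trans (min_le_right _ _) (min_le_right _ _)
  set a : ℝ → ℝ := fun lam => (f (x₀ + lam•x) - f x₀)/lam^2 with ha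
  -- nonnegativity of a on (0, η]
  have ha0 : ∀ lam : ℝ, 0 < lam → lam ≤ η → 0 ≤ a lam := by
    intro lam hl hlη
    have hnorm : ‖lam•x‖ < ε₁ := by
      rw [norm_smul, Real.norm_eq_abs, abs_of_pos hl]
      calc lam * ‖x‖ < lam * r := by nlinarith
        _ ≤ η * r := by nlinarith
        _ ≤ (ε₁/(2*r)) * r := by nlinarith
        _ = ε₁/2 := by field_simp
        _ < ε₁ := by linarith
    have : f x₀ ≤ f (x₀ + lam•x) := by
      apply hmin'
      rw [dist_eq_norm]
      simpa using hnorm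
    have hl2 : (0:ℝ) < lam^2 := by positivity
    simp only [ha]
    exact div_nonneg (by linarith) (by positivity)
  -- upper bound of a on (0, η]
  have haM : ∀ lam : ℝ, 0 < lam → lam ≤ η → a lam ≤ K * ‖x‖^2 := by
    intro lam hl hlη
    have hnorm : ‖lam•x‖ ≤ δ := by
      rw [norm_smul, Real.norm_eq_abs, abs_of_pos hl]
      calc lam * ‖x‖ ≤ lam * r := by nlinarith
        _ ≤ η * r := by nlinarith
        _ ≤ (δ/r) * r := by nlinarith
        _ = δ := by field_simp
    have hq := hquad (lam•x) hnorm
    have hnum : f (x₀ + lam•x) - f x₀ ≤ K * (lam*‖x‖)^2 := by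
      have := (abs_le.mp hq).2
      rwa [norm_smul, Real.norm_eq_abs, abs_of_pos hl] at this
    have hl2 : (0:ℝ) < lam^2 := by positivity
    simp only [ha]
    rw [div_le_iff₀ hl2]
    nlinarith
  -- recurrence
  have hrec : ∀ lam : ℝ, 0 < lam → 2*lam ≤ η →
      2 * a (2*lam) - c/2 < a lam := by
    intro lam hl h2l
    have hlη : lam ≤ η := by linarith
    have hlε : |lam| < ε := by
      rw [abs_of_pos hl]; linarith
    have hg := hεg (by simpa [Real.dist_eq] using hlε) (Set.mem_Ioi.mpr hl)
    have hl0 : lam ≠ 0 := ne_of_gt hl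
    have hkey : (f (x₀ + (2*lam)•x) - 2*f (x₀+lam•x) + f x₀)/lam^2
        = 4 * a (2*lam) - 2 * a lam := by
      simp only [ha]
      field_simp
      ring
    rw [hkey] at hg
    linarith
  -- induction
  have key : ∀ n : ℕ, ((2:ℝ)^n - 1) * (-c) / 2 ≤ a (η/2 / 2^n) := by
    intro n
    induction n with
    | zero =>
      simpa using ha0 (η/2) (by positivity) (by linarith)
    | succ n ih =>
      have hlam : η/2/2^(n+1) = η/2/2^n / 2 := by
        rw [pow_succ]; ring
      have hsmall : (0:ℝ) < η/2/2^n / 2 := by positivity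
      have h1 : (1:ℝ) ≤ 2^n := one_le_pow₀ (by norm_num)
      have h2l : 2 * (η/2/2^n / 2) ≤ η := by
        rw [div_div]
        rw [mul_comm, div_mul_eq_mul_div, mul_comm]
        rw [div_le_iff₀ (by positivity)]
        nlinarith
      have hR := hrec _ hsmall h2l
      have he : 2*(η/2/2^n/2) = η/2/2^n := by ring
      rw [he] at hR
      rw [hlam, pow_succ]
      nlinarith [ih, hR]
  -- final contradiction
  obtain ⟨n, hn⟩ := pow_unbounded_of_one_lt ((2*K*‖x‖^2)/(-c) + 1) (by norm_num : (1:ℝ) < 2)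
  have h1 : (1:ℝ) ≤ 2^n := one_le_pow₀ (by norm_num)
  have hlamn : (0:ℝ) < η/2/2^n := by positivity
  have hlamη : η/2/2^n ≤ η := by
    rw [div_div]
    rw [div_le_iff₀ (by positivity)]
    nlinarith
  have hM := haM _ hlamn hlamη
  have hk := key n
  have hbig : K * ‖x‖^2 < ((2:ℝ)^n - 1) * (-c) / 2 := by
    have hcpos : 0 < -c := by linarith
    rw [lt_div_iff₀ (by norm_num : (0:ℝ) < 2)]
    have h2 : (2*K*‖x‖^2)/(-c) < 2^n - 1 := by linarith
    have := (div_lt_iff₀ hcpos).mp h2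
    linarith
  exact absurd (hk.trans hM) (not_le.mpr hbig)
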